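/- Let A : X → Y be compact with SVD as above, where X = L²(M) and each v_n ∈ L^∞(M). Define U = {y ∈ Y : Σ_n σ_n^{-1}|⟨y,u_n⟩| ‖v_n‖_{L^∞} < ∞}. Then for every y ∈ U, ‖A†y‖_{L^∞(M)} ≤ Σ_n σ_n^{-1}|⟨y,u_n⟩| ‖v_n‖_{L^∞} < ∞, and ‖A†y − T^c_α y‖_{L^∞(M)} → 0 as α → 0, where T^c_α y = Σ_n (σ_n/(σ_n² + α c_n)) ⟨y, u_n⟩ v_n with weights c_n ≥ c_0 > 0. -/

import Mathlib

open MeasureTheory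
open scoped RealInnerProductSpace Topology ENNReal

lemma stmt10_ae_bd {M : Type*} [MeasureSpace M] (v : ℕ → M → ℝ)
    (hvinf : ∀ n, MemLp (v n) ⊤ volume) :
    ∀ᵐ x, ∀ n, |v n x| ≤ (eLpNorm (v n) ⊤ volume).toReal := by
  rw [MeasureTheory.ae_all_iff]
  intro n
  filter_upwards [ae_le_eLpNormEssSup (f := v n) (μ := volume)] with x hx
  have hfin : eLpNormEssSup (v n) volume ≠ ∞ := by
    have := (hvinf n).2
    rwa [eLpNorm_exponent_top, lt_top_iff_ne_top] at this
  have : ((‖v n x‖₊ : ℝ≥0∞)).toReal ≤ (eLpNormEssSup (v n) volume).toReal :=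
    ENNReal.toReal_mono hfin hx
  simpa [eLpNorm_exponent_top, Real.norm_eq_abs] using this

lemma stmt10_key {M : Type*} [MeasureSpace M] (v : ℕ → M → ℝ)
    (hvinf : ∀ n, MemLp (v n) ⊤ volume) (a b : ℕ → ℝ) (hb : Summable b)
    (hab : ∀ n, |a n| * (eLpNorm (v n) ⊤ volume).toReal ≤ b n) :
    eLpNorm (fun x => ∑' n, a n * v n x) ⊤ volume ≤ ENNReal.ofReal (∑' n, b n) := by
  rw [eLpNorm_exponent_top]
  apply eLpNormEssSup_le_of_ae_bound
  filter_upwards [stmt10_ae_bd v hvinf] with x hx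
  have hle : ∀ n, ‖a n * v n x‖ ≤ b n := by
    intro n
    calc ‖a n * v n x‖ = |a n| * |v n x| := by rw [Real.norm_eq_abs, abs_mul]
    _ ≤ |a n| * (eLpNorm (v n) ⊤ volume).toReal :=
        mul_le_mul_of_nonneg_left (hx n) (abs_nonneg _)
    _ ≤ b n := hab n
  have hs : Summable (fun n => ‖a n * v n x‖) :=
    Summable.of_nonneg_of_le (fun n => norm_nonneg _) hle hb
  calc ‖∑' n, a n * v n x‖ ≤ ∑' n, ‖a n * v n x‖ := norm_tsum_le_tsum_norm hs
  _ ≤ ∑' n, b n := Summable.tsum_le_tsum hle hs hb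

theorem stmt10
    {M : Type*} [MeasureSpace M]
    {Y : Type*} [NormedAddCommGroup Y] [InnerProductSpace ℝ Y] [CompleteSpace Y]
    (u : ℕ → Y) (hu : Orthonormal ℝ u)
    (v : ℕ → M → ℝ)
    (hv2 : ∀ n, MemLp (v n) 2 volume) (hvinf : ∀ n, MemLp (v n) ⊤ volume)
    (hvON : ∀ n m, ∫ x, v n x * v m x = if n = m then (1 : ℝ) else 0)
    (σ : ℕ → ℝ) (hσpos : ∀ n, 0 < σ n) (hσanti : Antitone σ)
    (hσ0 : Filter.Tendsto σ Filter.atTop (nhds 0))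
    (c : ℕ → ℝ) (c₀ : ℝ) (hc₀ : 0 < c₀) (hc : ∀ n, c₀ ≤ c n)
    (y : Y)
    (hyU : Summable
      (fun n => (σ n)⁻¹ * |⟪y, u n⟫| * (eLpNorm (v n) ⊤ volume).toReal)) :
    eLpNorm (fun x => ∑' n, (σ n)⁻¹ * ⟪y, u n⟫ * v n x) ⊤ volume ≤
      ENNReal.ofReal
        (∑' n, (σ n)⁻¹ * |⟪y, u n⟫| * (eLpNorm (v n) ⊤ volume).toReal) ∧
    Filter.Tendsto
      (fun α : ℝ =>
        eLpNorm
          (fun x =>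
            (∑' n, (σ n)⁻¹ * ⟪y, u n⟫ * v n x) -
              ∑' n, (σ n / ((σ n) ^ 2 + α * c n)) * ⟪y, u n⟫ * v n x) ⊤ volume)
      (𝓝[>] (0 : ℝ)) (𝓝 0) := by
  set C : ℕ → ℝ := fun n => (eLpNorm (v n) ⊤ volume).toReal with hC
  have hCnonneg : ∀ n, 0 ≤ C n := fun n => ENNReal.toReal_nonneg
  set g : ℕ → ℝ := fun n => |⟪y, u n⟫| with hg
  set w : ℝ → ℕ → ℝ := fun α n => σ n / ((σ n) ^ 2 + α * c n) with hw
  -- basic bounds on w for α > 0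
  have hwpos : ∀ α : ℝ, 0 < α → ∀ n, 0 ≤ w α n := by
    intro α hα n
    apply div_nonneg (hσpos n).le
    nlinarith [hσpos n, mul_pos hα (hc₀.trans_le (hc n))]
  have hwle : ∀ α : ℝ, 0 < α → ∀ n, w α n ≤ (σ n)⁻¹ := by
    intro α hα n
    have h1 : (0:ℝ) < (σ n) ^ 2 := pow_pos (hσpos n) 2
    have h2 : (σ n) ^ 2 ≤ (σ n) ^ 2 + α * c n := by
      nlinarith [hσpos n, hc n, hc₀]
    calc w α n ≤ σ n / (σ n) ^ 2 := by
          apply div_le_div_of_nonneg_left (hσpos n).le h1 h2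
    _ = (σ n)⁻¹ := by
          rw [sq, ← div_div, div_self (hσpos n).ne', one_div]
  -- Part 1
  have part1 : eLpNorm (fun x => ∑' n, (σ n)⁻¹ * ⟪y, u n⟫ * v n x) ⊤ volume ≤
      ENNReal.ofReal (∑' n, (σ n)⁻¹ * g n * C n) := by
    apply stmt10_key v hvinf _ _ hyU
    intro n
    have : |(σ n)⁻¹ * ⟪y, u n⟫| = (σ n)⁻¹ * g n := by
      rw [abs_mul, abs_of_pos (inv_pos.mpr (hσpos n))]
    rw [this]
  refine ⟨part1, ?_⟩
  -- the bound S α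
  set S : ℝ → ℝ := fun α => ∑' n, ((σ n)⁻¹ - w α n) * g n * C n with hS
  -- summability of the difference coefficients bound
  have hSsum : ∀ α : ℝ, 0 < α →
      Summable (fun n => ((σ n)⁻¹ - w α n) * g n * C n) := by
    intro α hα
    refine Summable.of_nonneg_of_le (fun n => ?_) (fun n => ?_) hyU
    · have h := hwle α hα n
      exact mul_nonneg (mul_nonneg (by linarith) (abs_nonneg _)) (hCnonneg n)
    · have h1 : (σ n)⁻¹ - w α n ≤ (σ n)⁻¹ := by
        have := hwpos α hα n; linarith
      apply mul_le_mul_of_nonneg_right _ (hCnonneg n)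
      exact mul_le_mul_of_nonneg_right h1 (abs_nonneg _)
  -- Step A : eLpNorm bound
  have stepA : ∀ α : ℝ, 0 < α →
      eLpNorm
        (fun x =>
          (∑' n, (σ n)⁻¹ * ⟪y, u n⟫ * v n x) -
            ∑' n, w α n * ⟪y, u n⟫ * v n x) ⊤ volume ≤
        ENNReal.ofReal (S α) := by
    intro α hα
    have hcongr :
        (fun x =>
          (∑' n, (σ n)⁻¹ * ⟪y, u n⟫ * v n x) -
            ∑' n, w α n * ⟪y, u n⟫ * v n x) =ᵐ[volume]
        (fun x => ∑' n, ((σ n)⁻¹ - w α n) * ⟪y, u n⟫ * v n x) := by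
      filter_upwards [stmt10_ae_bd v hvinf] with x hx
      have hs1 : Summable (fun n => (σ n)⁻¹ * ⟪y, u n⟫ * v n x) := by
        apply Summable.of_norm
        apply Summable.of_nonneg_of_le (fun n => norm_nonneg _) _ hyU
        intro n
        rw [Real.norm_eq_abs, abs_mul, abs_mul, abs_of_pos (inv_pos.mpr (hσpos n))]
        exact mul_le_mul_of_nonneg_left (hx n)
          (mul_nonneg (inv_nonneg.mpr (hσpos n).le) (abs_nonneg _))
      have hs2 : Summable (fun n => w α n * ⟪y, u n⟫ * v n x) := by
        apply Summable.of_norm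
        apply Summable.of_nonneg_of_le (fun n => norm_nonneg _) _ hyU
        intro n
        rw [Real.norm_eq_abs, abs_mul, abs_mul, abs_of_nonneg (hwpos α hα n)]
        calc w α n * |⟪y, u n⟫| * |v n x| ≤ (σ n)⁻¹ * |⟪y, u n⟫| * |v n x| := by
              apply mul_le_mul_of_nonneg_right _ (abs_nonneg _)
              exact mul_le_mul_of_nonneg_right (hwle α hα n) (abs_nonneg _)
        _ ≤ (σ n)⁻¹ * |⟪y, u n⟫| * C n :=
              mul_le_mul_of_nonneg_left (hx n)
                (mul_nonneg (inv_nonneg.mpr (hσpos n).le) (abs_nonneg _))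
      rw [← Summable.tsum_sub hs1 hs2]
      congr 1
      funext n
      ring
    rw [eLpNorm_congr_ae hcongr]
    apply stmt10_key v hvinf _ _ (hSsum α hα)
    intro n
    have h1 : (0:ℝ) ≤ (σ n)⁻¹ - w α n := by
      have := hwle α hα n; linarith
    have : |((σ n)⁻¹ - w α n) * ⟪y, u n⟫| = ((σ n)⁻¹ - w α n) * g n := by
      rw [abs_mul, abs_of_nonneg h1]
    rw [this]
  -- Step B : S α → 0
  have stepB : Filter.Tendsto S (𝓝[>] (0:ℝ)) (𝓝 0) := by
    have := tendsto_tsum_of_dominated_convergence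
      (𝓕 := 𝓝[>] (0:ℝ))
      (f := fun α n => ((σ n)⁻¹ - w α n) * g n * C n)
      (g := fun _ => (0:ℝ))
      (bound := fun n => (σ n)⁻¹ * g n * C n) hyU ?_ ?_
    · simpa using this
    · intro n
      have hcont : Filter.Tendsto (fun α : ℝ => w α n) (𝓝 0) (𝓝 ((σ n)⁻¹)) := by
        have hden : Filter.Tendsto (fun α : ℝ => (σ n) ^ 2 + α * c n) (𝓝 0)
            (𝓝 ((σ n) ^ 2)) := by
          have hco : Continuous (fun α : ℝ => (σ n) ^ 2 + α * c n) := by fun_prop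
          simpa using hco.tendsto 0
        have h := Filter.Tendsto.div (tendsto_const_nhds (x := σ n)) hden
          (pow_ne_zero 2 (hσpos n).ne')
        have h0 : σ n / (σ n) ^ 2 = (σ n)⁻¹ := by
          rw [sq, ← div_div, div_self (hσpos n).ne', one_div]
        simpa [hw, h0, Pi.div_def] using h
      have : Filter.Tendsto (fun α : ℝ => ((σ n)⁻¹ - w α n) * g n * C n)
          (𝓝 0) (𝓝 (((σ n)⁻¹ - (σ n)⁻¹) * g n * C n)) := by
        apply Filter.Tendsto.mul_const
        apply Filter.Tendsto.mul_const
        exact (tendsto_const_nhds.sub hcont)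
      simpa using this.mono_left nhdsWithin_le_nhds
    · filter_upwards [self_mem_nhdsWithin] with α (hα : 0 < α)
      intro n
      have h1 : (0:ℝ) ≤ (σ n)⁻¹ - w α n := by
        have := hwle α hα n; linarith
      have h2 : (σ n)⁻¹ - w α n ≤ (σ n)⁻¹ := by
        have := hwpos α hα n; linarith
      rw [Real.norm_eq_abs, abs_of_nonneg
        (mul_nonneg (mul_nonneg h1 (abs_nonneg _)) (hCnonneg n))]
      apply mul_le_mul_of_nonneg_right _ (hCnonneg n)
      exact mul_le_mul_of_nonneg_right h2 (abs_nonneg _)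
  -- Step C : squeeze
  have hof : Filter.Tendsto (fun α => ENNReal.ofReal (S α)) (𝓝[>] (0:ℝ)) (𝓝 0) := by
    have := (ENNReal.continuous_ofReal.tendsto 0).comp stepB
    simpa [Function.comp_def] using this
  apply tendsto_of_tendsto_of_tendsto_of_le_of_le' tendsto_const_nhds hof
  · exact Filter.Eventually.of_forall (fun α => zero_le)
  · filter_upwards [self_mem_nhdsWithin] with α (hα : 0 < α)
    exact stepA α hα
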